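/- Let G be a locally compact abelian group, Ω ⊆ G an open symmetric neighborhood of 0, and z ∈ Ω with -z ∈ Ω. Then there exists a continuous, real-valued, positive definite function f on G with compact support contained in Ω, f(0) = 1, and f(z) ≥ 1/2. Moreover, if 2z = 0 then f can be chosen with f(z) = 1. -/

import Mathlib

open Complex ComplexOrder Finset MeasureTheory

noncomputable section

/-- A function on an abelian group is positive definite if all the
associated quadratic forms are nonnegative (as complex numbers, i.e.
real and nonnegative). -/
def IsPosDef {G : Type*} [AddCommGroup G] (f : G → ℂ) : Prop :=
  ∀ (n : ℕ) (x : Fin n → G) (c : Fin n → ℂ),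
    0 ≤ ∑ j, ∑ k, c j * (starRingEnd ℂ) (c k) * f (x j - x k)

theorem stmt19 {G : Type*} [TopologicalSpace G] [AddCommGroup G]
    [IsTopologicalAddGroup G] [LocallyCompactSpace G] [T2Space G]
    (Ω : Set G) (hopen : IsOpen Ω) (h0 : (0 : G) ∈ Ω)
    (hsym : ∀ x ∈ Ω, -x ∈ Ω) (z : G) (hz : z ∈ Ω) (hzneg : -z ∈ Ω) :
    (∃ f : G → ℝ, Continuous f ∧ IsPosDef (fun x => ((f x : ℝ) : ℂ)) ∧
      HasCompactSupport f ∧ tsupport f ⊆ Ω ∧ f 0 = 1 ∧ 1 / 2 ≤ f z) ∧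
    (z + z = 0 → ∃ f : G → ℝ, Continuous f ∧ IsPosDef (fun x => ((f x : ℝ) : ℂ)) ∧
      HasCompactSupport f ∧ tsupport f ⊆ Ω ∧ f 0 = 1 ∧ f z = 1) := by
  borelize G
  have : Nonempty G := ⟨0⟩
  obtain ⟨K₀⟩ : Nonempty (TopologicalSpace.PositiveCompacts G) := inferInstance
  set μ := Measure.addHaarMeasure K₀ with hμdef
  -- an open neighborhood of 0 controlling the support
  have hNopen : IsOpen (Ω ∩ ((fun w => z + w) ⁻¹' Ω) ∩ ((fun w => -z + w) ⁻¹' Ω)) :=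
    (hopen.inter (hopen.preimage (continuous_const.add continuous_id))).inter
      (hopen.preimage (continuous_const.add continuous_id))
  have hN0 : (0:G) ∈ Ω ∩ ((fun w => z + w) ⁻¹' Ω) ∩ ((fun w => -z + w) ⁻¹' Ω) := by
    simp [h0, hz, hzneg]
  obtain ⟨W, hWnhds, hWsub⟩ := exists_nhds_half_neg (hNopen.mem_nhds hN0)
  obtain ⟨s, hs_nhds, hsW, hs_comp⟩ := local_compact_nhds hWnhds
  have hN : ∀ u ∈ s, ∀ w ∈ s, u - w ∈ Ω ∧ z + (u - w) ∈ Ω ∧ -z + (u - w) ∈ Ω := by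
    intro u hu w hw
    have h := hWsub u (hsW hu) w (hsW hw)
    exact ⟨h.1.1, h.1.2, h.2⟩
  set V : Set G := interior s with hVdef
  have hVopen : IsOpen V := isOpen_interior
  have h0V : (0:G) ∈ V := mem_interior_iff_mem_nhds.2 hs_nhds
  have hVs : V ⊆ s := interior_subset
  -- the set S = V ∪ (z + V)
  set S : Set G := V ∪ ((fun t => t - z) ⁻¹' V) with hSdef
  have hSopen : IsOpen S := hVopen.union (hVopen.preimage (continuous_id.sub continuous_const))
  have hSmeas : MeasurableSet S := hSopen.measurableSet
  set K : Set G := s ∪ (fun t => t + z) '' s with hKdef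
  have hKcomp : IsCompact K := hs_comp.union (hs_comp.image (continuous_id.add continuous_const))
  have hSK : S ⊆ K := by
    rintro t (ht | ht)
    · exact Or.inl (hVs ht)
    · exact Or.inr ⟨t - z, hVs ht, sub_add_cancel t z⟩
  have hSfin : μ S ≠ ⊤ := ((measure_mono hSK).trans_lt hKcomp.measure_lt_top).ne
  have hSpos : 0 < μ S := hSopen.measure_pos μ ⟨0, Or.inl h0V⟩
  set α : ℝ := (μ S).toReal with hαdef
  have hα : 0 < α := ENNReal.toReal_pos hSpos.ne' hSfin
  -- translations
  have hmp : ∀ x : G, MeasurePreserving (fun t => t + x) μ μ := fun x =>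
    measurePreserving_add_right μ x
  have hpre : ∀ x : G, MeasurableSet ((fun t => t + x) ⁻¹' S) := fun x =>
    hSmeas.preimage (hmp x).measurable
  have hprefin : ∀ x : G, μ ((fun t => t + x) ⁻¹' S) ≠ ⊤ := fun x => by
    rw [(hmp x).measure_preimage hSmeas.nullMeasurableSet]; exact hSfin
  -- the function
  set m : G → ℝ := fun x => (μ (S ∩ (fun t => t + x) ⁻¹' S)).toReal with hmdef
  set f : G → ℝ := fun x => m x / α with hfdef
  have hm_nonneg : ∀ x, 0 ≤ m x := fun x => ENNReal.toReal_nonneg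
  have hf0 : f 0 = 1 := by
    have h1 : (fun t : G => t + 0) ⁻¹' S = S := by ext t; simp
    simp only [hfdef, hmdef, h1, Set.inter_self]
    exact div_self hα.ne'
  -- L² machinery
  set g : Lp ℂ 2 μ := indicatorConstLp 2 hSmeas hSfin (1:ℂ) with hgdef
  set T : G → Lp ℂ 2 μ := fun x =>
    Lp.compMeasurePreserving (fun t => t + x) (hmp x) g with hTdef
  have hTg : ∀ x, T x = indicatorConstLp 2 (hpre x) (hprefin x) (1:ℂ) := fun x =>
    Lp.indicatorConstLp_compMeasurePreserving hSmeas hSfin 1 (hmp x)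
  have key : ∀ (A B : Set G) (hA : MeasurableSet A) (hB : MeasurableSet B)
      (hAf : μ A ≠ ⊤) (hBf : μ B ≠ ⊤),
      (inner ℂ (indicatorConstLp 2 hA hAf (1:ℂ)) (indicatorConstLp 2 hB hBf (1:ℂ)) : ℂ)
        = ((μ (A ∩ B)).toReal : ℂ) := by
    intro A B hA hB hAf hBf
    rw [L2.inner_def]
    have h : ∀ᵐ a ∂μ, (inner ℂ ((indicatorConstLp 2 hA hAf (1:ℂ)) a)
        ((indicatorConstLp 2 hB hBf (1:ℂ)) a) : ℂ)
        = (A ∩ B).indicator (fun _ => (1:ℂ)) a := by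
      filter_upwards [indicatorConstLp_coeFn (p := 2) (hs := hA) (hμs := hAf) (c := (1:ℂ)),
        indicatorConstLp_coeFn (p := 2) (hs := hB) (hμs := hBf) (c := (1:ℂ))] with a h1 h2
      rw [h1, h2]
      by_cases ha : a ∈ A <;> by_cases hb : a ∈ B <;>
        simp [Set.indicator, ha, hb, RCLike.inner_apply]
    rw [integral_congr_ae h, integral_indicator_const _ (hA.inter hB)]
    simp [Measure.real]
  have hinner : ∀ x y : G, (inner ℂ (T y) (T x) : ℂ) = ((m (x - y) : ℝ) : ℂ) := by
    intro x y
    rw [hTg, hTg, key _ _ (hpre y) (hpre x) (hprefin y) (hprefin x)]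
    have h1 : (fun t : G => t + y) ⁻¹' (S ∩ (fun t : G => t + (x - y)) ⁻¹' S)
        = ((fun t : G => t + y) ⁻¹' S ∩ (fun t : G => t + x) ⁻¹' S) := by
      ext t
      simp only [Set.mem_preimage, Set.mem_inter_iff]
      rw [show t + y + (x - y) = t + x by abel]
    have h2 : μ ((fun t : G => t + y) ⁻¹' S ∩ (fun t : G => t + x) ⁻¹' S)
        = μ (S ∩ (fun t : G => t + (x - y)) ⁻¹' S) := by
      rw [← h1, (hmp y).measure_preimage
        ((hSmeas.inter (hpre (x - y))).nullMeasurableSet)]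
    simp only [hmdef]
    rw [h2]
  have hinner0 : ∀ x : G, (inner ℂ g (T x) : ℂ) = ((m x : ℝ) : ℂ) := by
    intro x
    have h := hinner x 0
    rw [hgdef, hTg x, key _ _ hSmeas (hpre x) hSfin (hprefin x)]
  -- continuity
  have hTcont : Continuous T := by
    have hc : Continuous fun x : G =>
        (⟨ContinuousMap.mk (fun t => t + x) (continuous_id.add continuous_const),
          hmp x⟩ : {f : C(G, G) // MeasurePreserving f μ μ}) := by
      refine Continuous.subtype_mk ?_ _
      exact ContinuousMap.continuous_of_continuous_uncurry _ (continuous_snd.add continuous_fst)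
    exact (Lp.compMeasurePreserving_continuous μ μ ℂ (p := 2) (by norm_num)).comp
      (continuous_const.prodMk hc)
  have hFcont : Continuous fun x : G => (inner ℂ g (T x) : ℂ) :=
    Continuous.inner continuous_const hTcont
  have hmcont : Continuous m := by
    have h : m = fun x => ((inner ℂ g (T x) : ℂ)).re := by
      funext x; rw [hinner0 x, Complex.ofReal_re]
    rw [h]
    exact Complex.continuous_re.comp hFcont
  have hfcont : Continuous f := hmcont.div_const α
  -- positive definiteness
  have hposdef : IsPosDef (fun x => ((f x : ℝ) : ℂ)) := by
    intro n x c
    show 0 ≤ ∑ j, ∑ k, c j * (starRingEnd ℂ) (c k) * ((f (x j - x k) : ℝ) : ℂ)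
    set v : Lp ℂ 2 μ := ∑ k, c k • T (x k) with hv
    have hvv : (inner ℂ v v : ℂ)
        = ∑ j, ∑ k, c j * (starRingEnd ℂ) (c k) * ((m (x j - x k) : ℝ) : ℂ) := by
      calc (inner ℂ v v : ℂ)
          = ∑ k, (starRingEnd ℂ) (c k) * (inner ℂ (T (x k)) v : ℂ) := by
            rw [hv, sum_inner]
            exact Finset.sum_congr rfl fun k _ => inner_smul_left _ _ _
        _ = ∑ k, ∑ j, (starRingEnd ℂ) (c k) * (c j * (inner ℂ (T (x k)) (T (x j)) : ℂ)) := by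
            refine Finset.sum_congr rfl fun k _ => ?_
            rw [hv, inner_sum, Finset.mul_sum]
            exact Finset.sum_congr rfl fun j _ => by rw [inner_smul_right]
        _ = ∑ j, ∑ k, c j * (starRingEnd ℂ) (c k) * ((m (x j - x k) : ℝ) : ℂ) := by
            rw [Finset.sum_comm]
            exact Finset.sum_congr rfl fun j _ => Finset.sum_congr rfl fun k _ => by
              rw [hinner (x j) (x k)]; ring
    have hgoal : ∑ j, ∑ k, c j * (starRingEnd ℂ) (c k) * ((f (x j - x k) : ℝ) : ℂ)
        = ((α⁻¹ : ℝ) : ℂ) * (inner ℂ v v : ℂ) := by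
      rw [hvv, Finset.mul_sum]
      refine Finset.sum_congr rfl fun j _ => ?_
      rw [Finset.mul_sum]
      refine Finset.sum_congr rfl fun k _ => ?_
      simp only [hfdef]
      push_cast
      ring
    rw [hgoal]
    have hvsq : (inner ℂ v v : ℂ) = ((‖v‖^2 : ℝ) : ℂ) := by
      rw [inner_self_eq_norm_sq_to_K]; norm_cast
    rw [hvsq, ← Complex.ofReal_mul]
    exact Complex.zero_le_real.2 (mul_nonneg (inv_nonneg.2 hα.le) (sq_nonneg _))
  -- compact support inside Ω
  have hsupp : Function.support f ⊆ (fun p : G × G => p.1 - p.2) '' (K ×ˢ K) := by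
    intro x hx
    have hmne : μ (S ∩ (fun t : G => t + x) ⁻¹' S) ≠ 0 := by
      intro h
      apply hx
      simp only [hfdef, hmdef, h, ENNReal.toReal_zero, zero_div]
    obtain ⟨t, htS, htx⟩ := nonempty_of_measure_ne_zero hmne
    exact ⟨(t + x, t), ⟨hSK htx, hSK htS⟩, add_sub_cancel_left t x⟩
  have hKKcomp : IsCompact ((fun p : G × G => p.1 - p.2) '' (K ×ˢ K)) :=
    (hKcomp.prod hKcomp).image continuous_sub
  have htsupp : tsupport f ⊆ (fun p : G × G => p.1 - p.2) '' (K ×ˢ K) :=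
    closure_minimal hsupp hKKcomp.isClosed
  have hHCS : HasCompactSupport f :=
    hKKcomp.of_isClosed_subset isClosed_closure htsupp
  have hKKΩ : (fun p : G × G => p.1 - p.2) '' (K ×ˢ K) ⊆ Ω := by
    rintro _ ⟨⟨a, b⟩, ⟨ha, hb⟩, rfl⟩
    simp only at ha hb ⊢
    rcases ha with ha | ⟨a', ha', rfl⟩ <;> rcases hb with hb | ⟨b', hb', rfl⟩
    · exact (hN a ha b hb).1
    · rw [show a - (b' + z) = -z + (a - b') by abel]
      exact (hN a ha b' hb').2.2
    · rw [show a' + z - b = z + (a' - b) by abel]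
      exact (hN a' ha' b hb).2.1
    · rw [show a' + z - (b' + z) = a' - b' by abel]
      exact (hN a' ha' b' hb').1
  have htsuppΩ : tsupport f ⊆ Ω := htsupp.trans hKKΩ
  -- lower bound at z
  have hVsub : V ⊆ S ∩ (fun t : G => t + z) ⁻¹' S := by
    intro t ht
    refine ⟨Or.inl ht, Or.inr ?_⟩
    show t + z - z ∈ V
    rwa [add_sub_cancel_right]
  have hVfin : μ V ≠ ⊤ :=
    ((measure_mono (Set.subset_union_left : V ⊆ S)).trans_lt
      (lt_top_iff_ne_top.2 hSfin)).ne
  have hb : 0 < (μ V).toReal :=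
    ENNReal.toReal_pos (hVopen.measure_pos μ ⟨0, h0V⟩).ne' hVfin
  have hmz : (μ V).toReal ≤ m z :=
    ENNReal.toReal_mono (ne_top_of_le_ne_top hSfin (measure_mono Set.inter_subset_left))
      (measure_mono hVsub)
  have hμS2 : α ≤ 2 * (μ V).toReal := by
    have h1 : μ ((fun t : G => t - z) ⁻¹' V) = μ V := by
      have h0 : (fun t : G => t - z) ⁻¹' V = (fun t : G => t + (-z)) ⁻¹' V := by
        ext t; simp [sub_eq_add_neg]
      rw [h0, (hmp (-z)).measure_preimage hVopen.measurableSet.nullMeasurableSet]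
    have h2 : μ S ≤ μ V + μ V := (measure_union_le _ _).trans (by rw [h1])
    calc α ≤ (μ V + μ V).toReal :=
          ENNReal.toReal_mono (by simp [ENNReal.add_ne_top, hVfin]) h2
      _ = 2 * (μ V).toReal := by rw [ENNReal.toReal_add hVfin hVfin]; ring
  have hfz : 1/2 ≤ f z := by
    have h12 : (1:ℝ)/2 = (μ V).toReal / (2 * (μ V).toReal) := by
      field_simp
    rw [h12, hfdef]
    exact div_le_div₀ (hm_nonneg z) hmz hα hμS2
  refine ⟨⟨f, hfcont, hposdef, hHCS, htsuppΩ, hf0, hfz⟩,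
    fun h2z => ⟨f, hfcont, hposdef, hHCS, htsuppΩ, hf0, ?_⟩⟩
  -- the case 2z = 0
  have hzz : z = -z := eq_neg_of_add_eq_zero_left h2z
  have hSsub : S ⊆ (fun t : G => t + z) ⁻¹' S := by
    rintro t (ht | ht)
    · refine Or.inr ?_
      show t + z - z ∈ V
      rwa [add_sub_cancel_right]
    · refine Or.inl ?_
      have h3 : t + z = t - z := by rw [sub_eq_add_neg, ← hzz]
      show t + z ∈ V
      rw [h3]; exact ht
  have h4 : S ∩ (fun t : G => t + z) ⁻¹' S = S := Set.inter_eq_left.2 hSsub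
  simp only [hfdef, hmdef, h4]
  exact div_self hα.ne'

end
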